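/- Let K = ℚ (or any field of characteristic 0) and n = 4. The points p = (−1,0,1,2, 1,7,−3,9) and q = (−1,0,1,2, −3,1,9,7) in K⁴ × K⁴ are not in the same S₄-orbit under the diagonal action, yet f_{j,k}(p) = f_{j,k}(q) for all (j,k) ∈ I with (j,k) ≠ (1,1). -/

import Mathlib

theorem stmt_12 {K : Type*} [Field K] [CharZero K] :
    let p : (Fin 4 → K) × (Fin 4 → K) := (![-1, 0, 1, 2], ![1, 7, -3, 9])
    let q : (Fin 4 → K) × (Fin 4 → K) := (![-1, 0, 1, 2], ![-3, 1, 9, 7])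
    (¬ ∃ σ : Equiv.Perm (Fin 4),
      (∀ i, q.1 (σ i) = p.1 i) ∧ (∀ i, q.2 (σ i) = p.2 i)) ∧
    (∀ j k : ℕ, j ≤ 4 → k ≤ 4 / (j + 1) → (j, k) ≠ (0, 0) → (j, k) ≠ (1, 1) →
      ∑ i, p.1 i ^ j * p.2 i ^ k = ∑ i, q.1 i ^ j * q.2 i ^ k) := by
  intro p q
  constructor
  · rintro ⟨σ, h1, h2⟩
    have hcases : ∀ x : Fin 4, x = 0 ∨ x = 1 ∨ x = 2 ∨ x = 3 := by decide
    have e1 := h1 0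
    have e2 := h2 0
    rcases hcases (σ 0) with h | h | h | h <;> rw [h] at e1 e2 <;>
      simp only [p, q, Matrix.cons_val_zero, Matrix.cons_val_one, Matrix.head_cons,
        Matrix.cons_val_fin_one, Matrix.cons_val_succ] at e1 e2 <;> revert e1 e2 <;> norm_num [Matrix.cons_val_two, Matrix.cons_val_three, Matrix.tail_cons,
          Matrix.head_cons]
  · intro j k hj hk h00 h11
    interval_cases j <;> interval_cases k <;>
      simp_all [p, q, Fin.sum_univ_four] <;> ring
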